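/- Under the hypotheses of Lemma 1 (f continuous on [a,c], differentiable on (a,c), f' ≥ -1, f(x) > x on [a,c), c the unique fixed point), the iterative sequence x_{n+1} = (x_n + f(x_n))/2 with x₀ ∈ [a,c) is monotonically nondecreasing. -/

import Mathlib

theorem stmt2 (f : ℝ → ℝ) (a c : ℝ) (hac : a < c)
    (hcont : ContinuousOn f (Set.Icc a c))
    (hdiff : ∀ x ∈ Set.Ioo a c, DifferentiableAt ℝ f x)
    (hderiv : ∀ x ∈ Set.Ioo a c, -1 ≤ deriv f x)
    (hgt : ∀ x ∈ Set.Ico a c, f x > x)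
    (hfix : f c = c)
    (huniq : ∀ x ∈ Set.Icc a c, f x = x → x = c)
    (x : ℕ → ℝ) (hx0 : x 0 ∈ Set.Ico a c)
    (hrec : ∀ n, x (n + 1) = (x n + f (x n)) / 2) :
    Monotone x := by
  -- g = f + id is monotone on [a,c]
  have hgmono : MonotoneOn (fun t => f t + t) (Set.Icc a c) := by
    apply monotoneOn_of_deriv_nonneg (convex_Icc a c)
      (hcont.add continuousOn_id)
    · intro t ht
      rw [interior_Icc] at ht
      exact ((hdiff t ht).add differentiableAt_id).differentiableWithinAt
    · intro t ht
      rw [interior_Icc] at ht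
      have : deriv (fun y => f y + id y) t = deriv f t + 1 := by
        rw [deriv_fun_add (hdiff t ht) differentiableAt_id, deriv_id]
      rw [show (f + id) = (fun y => f y + id y) from rfl, this]
      linarith [hderiv t ht]
  have hge : ∀ y ∈ Set.Icc a c, f y ≥ y := by
    intro y hy
    rcases lt_or_eq_of_le hy.2 with h | h
    · exact le_of_lt (hgt y ⟨hy.1, h⟩)
    · rw [h, hfix]
  have hinv : ∀ n, x n ∈ Set.Icc a c := by
    intro n
    induction n with
    | zero => exact ⟨hx0.1, le_of_lt hx0.2⟩
    | succ n ih =>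
      constructor
      · rw [hrec n]
        have := hge _ ih
        linarith [ih.1]
      · rw [hrec n]
        have := hgmono ih (Set.right_mem_Icc.mpr (le_of_lt hac)) ih.2
        simp only [hfix] at this
        linarith
  apply monotone_nat_of_le_succ
  intro n
  rw [hrec n]
  have := hge _ (hinv n)
  linarith
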